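/- Let $k$ be a field and $m_1, m_2, r_1, r_2$ positive integers with $m_{12} = \gcd(m_1,m_2)$. Let $k_m := k[\epsilon]/(\epsilon^m)$, where $k_{m_1}$ and $k_{m_2}$ are viewed as $k_{m_{12}}$-algebras via $\epsilon \mapsto \epsilon^{m_1/m_{12}}$ and $\epsilon \mapsto \epsilon^{m_2/m_{12}}$ respectively. Then the $k$-vector space $\mathrm{Hom}_{k_{m_{12}}}(k_{m_1}^{\oplus r_1}, k_{m_2}^{\oplus r_2})$ has dimension $\mathrm{lcm}(m_1,m_2)\cdot r_1 r_2$. -/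

import Mathlib

open Polynomial

noncomputable section

variable (k : Type*) [Field k]

/-- The truncated polynomial ring `k_m = k[ε]/(ε^m)`. -/
def km (m : ℕ) : Type _ := Polynomial k ⧸ Ideal.span {(X : Polynomial k) ^ m}

instance (m : ℕ) : CommRing (km k m) := Ideal.Quotient.commRing _
instance (m : ℕ) : Algebra k (km k m) := Ideal.Quotient.algebra k

/-- The class of `ε` in `k_m`. -/
def epsm (m : ℕ) : km k m := Ideal.Quotient.mk _ X

lemma epsm_pow_self (m : ℕ) : epsm k m ^ m = 0 :=
  (show epsm k m ^ m = Ideal.Quotient.mk _ ((X : Polynomial k) ^ m) from (map_pow _ _ _).symm).trans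
    (Ideal.Quotient.eq_zero_iff_mem.mpr (Ideal.subset_span rfl))

/-- The ring homomorphism `k_a → k_b`, `ε ↦ ε^f` (requires `b ≤ f * a`). -/
def truncHom (a b f : ℕ) (h : b ≤ f * a) : km k a →+* km k b :=
  Ideal.Quotient.lift _ (aeval (epsm k b ^ f)).toRingHom (by
    intro p hp
    rw [Ideal.mem_span_singleton] at hp
    obtain ⟨q, rfl⟩ := hp
    have hz : (epsm k b ^ f) ^ a = 0 := by
      rw [← pow_mul, show f * a = b + (f * a - b) from (Nat.add_sub_cancel' h).symm,
        pow_add, epsm_pow_self, zero_mul]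
    simp [map_mul, map_pow, hz])

/-- `(k_b)^r` as a module over `k_a`, via `ε ↦ ε^f`. -/
def compModule (a b f : ℕ) (h : b ≤ f * a) (r : ℕ) :
    Module (km k a) (Fin r → km k b) :=
  Module.compHom _ (truncHom k a b f h)

/-- The space `Hom_{k_{gcd(m₁,m₂)}}(k_{m₁}^{r₁}, k_{m₂}^{r₂})`, where `k_{mᵢ}` is a
`k_{gcd(m₁,m₂)}`-algebra via `ε ↦ ε^{mᵢ/gcd(m₁,m₂)}`. -/
def HomSpace (m1 m2 r1 r2 : ℕ) : Type _ :=
  letI := compModule k (Nat.gcd m1 m2) m1 (m1 / Nat.gcd m1 m2)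
    (le_of_eq (Nat.div_mul_cancel (Nat.gcd_dvd_left m1 m2)).symm) r1
  letI := compModule k (Nat.gcd m1 m2) m2 (m2 / Nat.gcd m1 m2)
    (le_of_eq (Nat.div_mul_cancel (Nat.gcd_dvd_right m1 m2)).symm) r2
  (Fin r1 → km k m1) →ₗ[km k (Nat.gcd m1 m2)] (Fin r2 → km k m2)

instance (m1 m2 r1 r2 : ℕ) : AddCommGroup (HomSpace k m1 m2 r1 r2) :=
  letI := compModule k (Nat.gcd m1 m2) m1 (m1 / Nat.gcd m1 m2)
    (le_of_eq (Nat.div_mul_cancel (Nat.gcd_dvd_left m1 m2)).symm) r1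
  letI := compModule k (Nat.gcd m1 m2) m2 (m2 / Nat.gcd m1 m2)
    (le_of_eq (Nat.div_mul_cancel (Nat.gcd_dvd_right m1 m2)).symm) r2
  (inferInstance :
    (AddCommGroup ((Fin r1 → km k m1) →ₗ[km k (Nat.gcd m1 m2)] (Fin r2 → km k m2))))

instance (m1 m2 r1 r2 : ℕ) : Module k (HomSpace k m1 m2 r1 r2) :=
  letI := compModule k (Nat.gcd m1 m2) m1 (m1 / Nat.gcd m1 m2)
    (le_of_eq (Nat.div_mul_cancel (Nat.gcd_dvd_left m1 m2)).symm) r1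
  letI := compModule k (Nat.gcd m1 m2) m2 (m2 / Nat.gcd m1 m2)
    (le_of_eq (Nat.div_mul_cancel (Nat.gcd_dvd_right m1 m2)).symm) r2
  (Module.compHom
    ((Fin r1 → km k m1) →ₗ[km k (Nat.gcd m1 m2)] (Fin r2 → km k m2))
    (algebraMap k (km k (Nat.gcd m1 m2))) :
    Module k (HomSpace k m1 m2 r1 r2))


lemma Xpow_ne (m : ℕ) : (X : Polynomial k) ^ m ≠ 0 := pow_ne_zero _ X_ne_zero

def kmBasis (m : ℕ) : Module.Basis (Fin m) k (km k m) :=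
  ((AdjoinRoot.powerBasis (Xpow_ne k m)).basis).reindex (finCongr (by simp))

lemma kmBasis_apply (m : ℕ) (i : Fin m) :
    kmBasis k m i = epsm k m ^ (i : ℕ) := by
  show ((AdjoinRoot.powerBasis (Xpow_ne k m)).basis).reindex (finCongr (by simp)) i = _
  erw [Module.Basis.reindex_apply, PowerBasis.basis_eq_pow]
  rfl

lemma truncHom_epsm (a b f : ℕ) (h : b ≤ f * a) :
    truncHom k a b f h (epsm k a) = epsm k b ^ f := by
  show Ideal.Quotient.lift _ _ _ (Ideal.Quotient.mk _ X) = _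
  rw [Ideal.Quotient.lift_mk]
  simp

lemma truncHom_algebraMap (a b f : ℕ) (h : b ≤ f * a) (c : k) :
    truncHom k a b f h (algebraMap k (km k a) c) = algebraMap k (km k b) c := by
  show Ideal.Quotient.lift _ _ _ (Ideal.Quotient.mk _ (C c)) = _
  rw [Ideal.Quotient.lift_mk]
  simp only [AlgHom.toRingHom_eq_coe, RingHom.coe_coe, aeval_C]

/-- module structure on `km k b` over `km k a` via `ε ↦ ε^f`. -/
def modKm (a b f : ℕ) (h : b ≤ f * a) : Module (km k a) (km k b) :=
  Module.compHom _ (truncHom k a b f h)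

def idxEquiv (a b f : ℕ) (hb : b = f * a) : (Σ _ : Fin f, Fin a) ≃ Fin b :=
  (Equiv.sigmaEquivProd (Fin f) (Fin a)).trans <| (Equiv.prodComm _ _).trans <|
    finProdFinEquiv.trans (finCongr ((mul_comm a f).trans hb.symm))

lemma idxEquiv_val (a b f : ℕ) (hb : b = f * a) (i : Fin f) (j : Fin a) :
    ((idxEquiv a b f hb ⟨i, j⟩ : Fin b) : ℕ) = (i : ℕ) + f * (j : ℕ) := rfl

/-- `km k b` is free over `km k a` with basis `1, ε, …, ε^{f-1}`. -/
def kmOverBasis (a b f : ℕ) (hb : b = f * a) :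
    letI := modKm k a b f (le_of_eq hb) ; Module.Basis (Fin f) (km k a) (km k b) := by
  letI := modKm k a b f (le_of_eq hb)
  let v : Fin f → km k b := fun i => epsm k b ^ (i : ℕ)
  let φ : (Fin f → km k a) →ₗ[km k a] km k b :=
    Fintype.linearCombination (km k a) v
  have hsm : ∀ (c : k) (x : Fin f → km k a), φ (c • x) = c • φ x := by
    intro c x
    rw [show (c • x) = (algebraMap k (km k a) c) • x from (algebraMap_smul _ c x).symm,
      map_smul]
    show truncHom k a b f (le_of_eq hb) (algebraMap k (km k a) c) • φ x = c • φ x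
    rw [truncHom_algebraMap]
    show algebraMap k (km k b) c * φ x = c • φ x
    rw [Algebra.smul_def]
  let φk : (Fin f → km k a) →ₗ[k] km k b :=
    { toFun := φ, map_add' := φ.map_add, map_smul' := hsm }
  let E : (Fin f → km k a) ≃ₗ[k] km k b :=
    (Pi.basis fun _ : Fin f => kmBasis k a).equiv (kmBasis k b) (idxEquiv a b f hb)
  have hE : φk = E.toLinearMap := by
    apply Module.Basis.ext (Pi.basis fun _ : Fin f => kmBasis k a)
    rintro ⟨i, j⟩
    have hR : E.toLinearMap ((Pi.basis fun _ : Fin f => kmBasis k a) ⟨i, j⟩)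
        = kmBasis k b (idxEquiv a b f hb ⟨i, j⟩) := Module.Basis.equiv_apply _ _ _ _
    have hL : φk ((Pi.basis fun _ : Fin f => kmBasis k a) ⟨i, j⟩)
        = (kmBasis k a j) • v i := by
      rw [Pi.basis_apply]
      show (Fintype.linearCombination (km k a) v) (Pi.single i (kmBasis k a j)) = _
      simp [Fintype.linearCombination_apply_single]
    rw [hL, hR, kmBasis_apply, kmBasis_apply, idxEquiv_val]
    show truncHom k a b f (le_of_eq hb) (epsm k a ^ (j : ℕ)) * epsm k b ^ (i : ℕ) = _
    rw [map_pow, truncHom_epsm, ← pow_mul, ← pow_add, add_comm]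
  have hbij : Function.Bijective ⇑φ := by
    have hfun : ⇑φ = ⇑E := funext fun x => congrFun (congrArg DFunLike.coe hE) x
    rw [hfun]
    exact E.bijective
  exact Module.Basis.ofEquivFun (LinearEquiv.ofBijective φ hbij).symm

/-- basis of `(km k b)^r` over `km k a`. -/
def bigBasis (a b f : ℕ) (hb : b = f * a) (r : ℕ) :
    letI := compModule k a b f (le_of_eq hb) r
    Module.Basis (Σ _ : Fin r, Fin f) (km k a) (Fin r → km k b) := by
  letI := modKm k a b f (le_of_eq hb)
  letI := compModule k a b f (le_of_eq hb) r
  have : (Pi.module (Fin r) (fun _ => km k b) (km k a) : Module (km k a) (Fin r → km k b))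
      = compModule k a b f (le_of_eq hb) r := rfl
  exact (Pi.basis fun _ : Fin r => kmOverBasis k a b f hb)

lemma smulCommClassN (a b f : ℕ) (h : b ≤ f * a) (r : ℕ) :
    letI := compModule k a b f h r
    SMulCommClass (km k a) k (Fin r → km k b) := by
  letI := compModule k a b f h r
  constructor
  intro x c y
  funext j
  show truncHom k a b f h x * (c • y j) = c • (truncHom k a b f h x * y j)
  exact mul_smul_comm c _ _

def homEquiv (m1 m2 r1 r2 : ℕ) (hm1 : 0 < m1) (hm2 : 0 < m2) :
    HomSpace k m1 m2 r1 r2 ≃ₗ[k]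
      ((Σ _ : Fin r1, Fin (m1 / Nat.gcd m1 m2)) → (Fin r2 → km k m2)) := by
  have hb1 : m1 = (m1 / Nat.gcd m1 m2) * Nat.gcd m1 m2 :=
    (Nat.div_mul_cancel (Nat.gcd_dvd_left m1 m2)).symm
  have hb2 : m2 = (m2 / Nat.gcd m1 m2) * Nat.gcd m1 m2 :=
    (Nat.div_mul_cancel (Nat.gcd_dvd_right m1 m2)).symm
  letI := compModule k (Nat.gcd m1 m2) m1 (m1 / Nat.gcd m1 m2) (le_of_eq hb1) r1
  letI := compModule k (Nat.gcd m1 m2) m2 (m2 / Nat.gcd m1 m2) (le_of_eq hb2) r2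
  letI := smulCommClassN k (Nat.gcd m1 m2) m2 (m2 / Nat.gcd m1 m2) (le_of_eq hb2) r2
  let B := bigBasis k (Nat.gcd m1 m2) m1 (m1 / Nat.gcd m1 m2) hb1 r1
  exact {
    toFun := fun F i =>
      (show (Fin r1 → km k m1) →ₗ[km k (Nat.gcd m1 m2)] (Fin r2 → km k m2) from F) (B i)
    map_add' := fun F G => rfl
    map_smul' := fun c F => by
      funext i
      show (truncHom k (Nat.gcd m1 m2) m2 (m2 / Nat.gcd m1 m2) (le_of_eq hb2)
          (algebraMap k (km k (Nat.gcd m1 m2)) c)) •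
        (show (Fin r1 → km k m1) →ₗ[km k (Nat.gcd m1 m2)] (Fin r2 → km k m2) from F) (B i)
        = c • (show (Fin r1 → km k m1) →ₗ[km k (Nat.gcd m1 m2)] (Fin r2 → km k m2) from F) (B i)
      rw [truncHom_algebraMap]
      exact algebraMap_smul (km k m2) c _
    invFun := fun gfun => (show HomSpace k m1 m2 r1 r2 from B.constr k gfun)
    left_inv := fun F => by
      show B.constr k _ = _
      exact B.constr_self k
        (show (Fin r1 → km k m1) →ₗ[km k (Nat.gcd m1 m2)] (Fin r2 → km k m2) from F)
    right_inv := fun gfun => by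
      funext i
      exact B.constr_basis k gfun i }

/-- The `k`-dimension of `Hom_{k_{m₁₂}}(k_{m₁}^{r₁}, k_{m₂}^{r₂})` is `lcm(m₁,m₂) r₁ r₂`. -/
theorem finrank_homSpace (m1 m2 r1 r2 : ℕ)
    (hm1 : 0 < m1) (hm2 : 0 < m2) (hr1 : 0 < r1) (hr2 : 0 < r2) :
    Module.finrank k (HomSpace k m1 m2 r1 r2) = Nat.lcm m1 m2 * (r1 * r2) := by
  rw [(homEquiv k m1 m2 r1 r2 hm1 hm2).finrank_eq]
  rw [Module.finrank_eq_card_basis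
    (Pi.basis fun _ : (Σ _ : Fin r1, Fin (m1 / Nat.gcd m1 m2)) =>
      Pi.basis fun _ : Fin r2 => kmBasis k m2)]
  simp only [Fintype.card_sigma, Fintype.card_fin, Finset.sum_const, Finset.card_univ,
    smul_eq_mul]
  -- arithmetic
  have hg : 0 < Nat.gcd m1 m2 := Nat.gcd_pos_of_pos_left m2 hm1
  have h1 : m1 / Nat.gcd m1 m2 * Nat.gcd m1 m2 = m1 :=
    Nat.div_mul_cancel (Nat.gcd_dvd_left m1 m2)
  have hl : Nat.gcd m1 m2 * Nat.lcm m1 m2 = m1 * m2 := Nat.gcd_mul_lcm m1 m2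
  apply Nat.eq_of_mul_eq_mul_left hg
  calc Nat.gcd m1 m2 * (r1 * (m1 / Nat.gcd m1 m2) * (r2 * m2))
      = (m1 / Nat.gcd m1 m2 * Nat.gcd m1 m2) * (r1 * (r2 * m2)) := by ring
    _ = m1 * (r1 * (r2 * m2)) := by rw [h1]
    _ = (Nat.gcd m1 m2 * Nat.lcm m1 m2) * (r1 * r2) := by rw [hl]; ring
    _ = Nat.gcd m1 m2 * (Nat.lcm m1 m2 * (r1 * r2)) := by ring


end
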